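/- Let c > 0, let f be a meromorphic function on the open unit disk 𝔻 with f^♯(z) ≥ c for all z ∈ 𝔻 (i.e. f ∈ ℱ_c), and let z₀ ∈ 𝔻. Then f^♯(z₀) ≤ (1 + √(1 − 4c²(1 − |z₀|²)²))/(2c(1 − |z₀|²)²). -/

import Mathlib

open Complex Metric ComplexConjugate

open scoped Classical in
/-- The spherical derivative of a meromorphic function `f` on the unit disk:
`|f'(z)|/(1+|f(z)|^2)` where `f` is analytic, and `|(1/f)'(z)|/(1+|(1/f)(z)|^2)` at poles. -/
noncomputable def sphDeriv (f : ℂ → ℂ) (z : ℂ) : ℝ :=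
  if AnalyticAt ℂ f z then
    ‖deriv f z‖ / (1 + (‖f z‖) ^ 2)
  else
    ‖deriv (fun w => (f w)⁻¹) z‖ / (1 + (‖(f z)⁻¹‖) ^ 2)

/-- `f` is meromorphic on the open unit disk: at each point it is either analytic,
or has a pole, i.e. `1/f` is analytic there and vanishes there. -/
def MeroOnDisk (f : ℂ → ℂ) : Prop :=
  ∀ z ∈ ball (0 : ℂ) 1,
    AnalyticAt ℂ f z ∨ (AnalyticAt ℂ (fun w => (f w)⁻¹) z ∧ (f z)⁻¹ = 0)

/-- A meromorphic function on the unit disk is locally univalent: `f'(z) ≠ 0` at every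
point where `f` is analytic, and every pole is simple (`1/f` has a simple zero). -/
def LocUnivOnDisk (f : ℂ → ℂ) : Prop :=
  ∀ z ∈ ball (0 : ℂ) 1,
    (AnalyticAt ℂ f z → deriv f z ≠ 0) ∧
    (¬ AnalyticAt ℂ f z → deriv (fun w => (f w)⁻¹) z ≠ 0)

open Filter Topology Set

private lemma analyticAt_deriv {f : ℂ → ℂ} {x : ℂ} (h : AnalyticAt ℂ f x) :
    AnalyticAt ℂ (deriv f) x := by
  obtain ⟨s, hmem, hs⟩ := h.eventually_analyticAt.exists_mem
  exact AnalyticOnNhd.deriv (fun y hy => hs y hy) x (mem_of_mem_nhds hmem)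

private lemma deriv_ne {c : ℝ} (hc : 0 < c) {f : ℂ → ℂ} {z : ℂ}
    (hA : AnalyticAt ℂ f z) (h : c ≤ sphDeriv f z) : deriv f z ≠ 0 := by
  intro h0
  rw [sphDeriv, if_pos hA, h0] at h
  simp only [norm_zero, zero_div] at h
  exact absurd h (not_le.mpr hc)

private lemma pole_deriv_ne {c : ℝ} (hc : 0 < c) {f : ℂ → ℂ} {z : ℂ}
    (hA : ¬ AnalyticAt ℂ f z) (h : c ≤ sphDeriv f z) :
    deriv (fun w => (f w)⁻¹) z ≠ 0 := by
  intro h0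
  rw [sphDeriv, if_neg hA, h0] at h
  simp only [norm_zero, zero_div] at h
  exact absurd h (not_le.mpr hc)

open scoped Classical in
private noncomputable def Rfun (f : ℂ → ℂ) (κ a b : ℂ) : ℂ → ℂ := fun z =>
  if AnalyticAt ℂ f z then (a + b * f z) ^ 2 / (κ * deriv f z)
  else (b + a * (f z)⁻¹) ^ 2 / (-(κ * deriv (fun w => (f w)⁻¹) z))

private lemma Rfun_analytic {c : ℝ} (hc : 0 < c) {f : ℂ → ℂ} (hf : MeroOnDisk f)
    (hge : ∀ z ∈ ball (0 : ℂ) 1, c ≤ sphDeriv f z) {κ : ℂ} (hκ : κ ≠ 0) (a b : ℂ)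
    {z : ℂ} (hz : z ∈ ball (0 : ℂ) 1) : AnalyticAt ℂ (Rfun f κ a b) z := by
  by_cases hA : AnalyticAt ℂ f z
  · have hd : deriv f z ≠ 0 := deriv_ne hc hA (hge z hz)
    have hform : AnalyticAt ℂ (fun w => (a + b * f w) ^ 2 / (κ * deriv f w)) z :=
      ((analyticAt_const.add (analyticAt_const.mul hA)).pow 2).div
        (analyticAt_const.mul (analyticAt_deriv hA)) (by simp [hκ, hd])
    refine hform.congr ?_
    filter_upwards [hA.eventually_analyticAt] with w hw
    simp only [Rfun, if_pos hw]
  · obtain ⟨hg, hval⟩ := (hf z hz).resolve_left hA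
    have hgd : deriv (fun w => (f w)⁻¹) z ≠ 0 := pole_deriv_ne hc hA (hge z hz)
    have hne : ∀ᶠ w in 𝓝[≠] z, (f w)⁻¹ ≠ 0 := by
      rcases hg.eventually_eq_zero_or_eventually_ne_zero with h | h
      · exfalso
        apply hgd
        have h2 : deriv (fun w => (f w)⁻¹) z = deriv (fun _ : ℂ => (0 : ℂ)) z :=
          Filter.EventuallyEq.deriv_eq h
        simpa using h2
      · exact h
    have hball : ∀ᶠ w in 𝓝 z, w ∈ ball (0 : ℂ) 1 := isOpen_ball.mem_nhds hz
    have hne' : ∀ᶠ w in 𝓝 z, w ≠ z → (f w)⁻¹ ≠ 0 := by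
      have := eventually_nhdsWithin_iff.mp hne
      filter_upwards [this] with w hw hwz
      exact hw hwz
    have hform : AnalyticAt ℂ
        (fun w => (b + a * (f w)⁻¹) ^ 2 / (-(κ * deriv (fun v => (f v)⁻¹) w))) z :=
      ((analyticAt_const.add (analyticAt_const.mul hg)).pow 2).div
        ((analyticAt_const.mul (analyticAt_deriv hg)).neg) (by simp [hκ, hgd])
    refine hform.congr ?_
    filter_upwards [hball, hne'] with w hw hwz
    rcases eq_or_ne w z with rfl | hne2
    · simp only [Rfun, if_neg hA]
    · have hgw : (f w)⁻¹ ≠ 0 := hwz hne2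
      have hfw : f w ≠ 0 := fun h0 => hgw (by simp [h0])
      have hAw : AnalyticAt ℂ f w := (hf w hw).resolve_right (fun hp => hgw hp.2)
      have hdw : deriv f w ≠ 0 := deriv_ne hc hAw (hge w hw)
      have hder : deriv (fun v => (f v)⁻¹) w = -deriv f w / (f w) ^ 2 :=
        deriv_inv'' hAw.differentiableAt hfw
      simp only [Rfun, if_pos hAw]
      rw [hder]
      field_simp
      ring

private lemma abs_identity (u w : ℂ) :
    ‖1 + conj w * u‖ ^ 2 + ‖u - w‖ ^ 2
      = (1 + ‖u‖ ^ 2) * (1 + ‖w‖ ^ 2) := by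
  simp only [Complex.sq_norm, Complex.normSq_apply, Complex.add_re, Complex.add_im,
    Complex.mul_re, Complex.mul_im, Complex.conj_re, Complex.conj_im, Complex.one_re,
    Complex.one_im, Complex.sub_re, Complex.sub_im]
  ring

private lemma Rfun_bound {c : ℝ} (hc : 0 < c) {f : ℂ → ℂ} (hf : MeroOnDisk f)
    (hge : ∀ z ∈ ball (0 : ℂ) 1, c ≤ sphDeriv f z) (w₀ : ℂ)
    {z : ℂ} (hz : z ∈ ball (0 : ℂ) 1) :
    ‖Rfun f ((1 + ‖w₀‖ ^ 2 : ℝ) : ℂ) 1 (conj w₀) z‖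
      + ‖Rfun f ((1 + ‖w₀‖ ^ 2 : ℝ) : ℂ) (-w₀) 1 z‖ ≤ 1 / c := by
  set κ : ℂ := ((1 + ‖w₀‖ ^ 2 : ℝ) : ℂ) with hκdef
  have hκabs : ‖κ‖ = 1 + ‖w₀‖ ^ 2 := by
    rw [hκdef, Complex.norm_real, Real.norm_eq_abs, abs_of_pos (by positivity)]
  have hw₀pos : (0:ℝ) < 1 + ‖w₀‖ ^ 2 := by positivity
  by_cases hA : AnalyticAt ℂ f z
  · have hge' := hge z hz
    rw [sphDeriv, if_pos hA] at hge'
    have hd : deriv f z ≠ 0 := deriv_ne hc hA (hge z hz)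
    have hdpos : 0 < ‖deriv f z‖ := by
      simpa [norm_pos_iff] using hd
    simp only [Rfun, if_pos hA, norm_div, norm_pow, norm_mul, hκabs]
    rw [← add_div]
    have hnum : ‖1 + conj w₀ * f z‖ ^ 2 + ‖-w₀ + 1 * f z‖ ^ 2
        = (1 + ‖f z‖ ^ 2) * (1 + ‖w₀‖ ^ 2) := by
      rw [show (-w₀ + 1 * f z) = f z - w₀ by ring]
      exact abs_identity (f z) w₀
    rw [hnum]
    rw [div_le_div_iff₀ (by positivity) hc]
    have h2 : c * (1 + ‖f z‖ ^ 2) ≤ ‖deriv f z‖ := by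
      rw [le_div_iff₀ (by positivity)] at hge'
      linarith
    calc (1 + ‖f z‖ ^ 2) * (1 + ‖w₀‖ ^ 2) * c
        = (c * (1 + ‖f z‖ ^ 2)) * (1 + ‖w₀‖ ^ 2) := by ring
      _ ≤ ‖deriv f z‖ * (1 + ‖w₀‖ ^ 2) := by
          apply mul_le_mul_of_nonneg_right h2 (by positivity)
      _ ≤ 1 * ((1 + ‖w₀‖ ^ 2) * ‖deriv f z‖) := by ring_nf; rfl
  · have hge' := hge z hz
    rw [sphDeriv, if_neg hA] at hge'
    have hd : deriv (fun w => (f w)⁻¹) z ≠ 0 := pole_deriv_ne hc hA (hge z hz)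
    have hdpos : 0 < ‖deriv (fun w => (f w)⁻¹) z‖ := by
      simpa [norm_pos_iff] using hd
    simp only [Rfun, if_neg hA, norm_div, norm_pow, norm_mul, norm_neg, hκabs]
    rw [← add_div]
    have hnum : ‖conj w₀ + 1 * (f z)⁻¹‖ ^ 2
          + ‖1 + -w₀ * (f z)⁻¹‖ ^ 2
        = (1 + ‖(f z)⁻¹‖ ^ 2) * (1 + ‖w₀‖ ^ 2) := by
      have := abs_identity ((f z)⁻¹) (-conj w₀)
      rw [show conj (-conj w₀) = -w₀ by simp] at this
      rw [show ((f z)⁻¹ - -conj w₀) = conj w₀ + 1 * (f z)⁻¹ by ring] at this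
      rw [norm_neg, Complex.norm_conj] at this
      linarith
    rw [hnum]
    rw [div_le_div_iff₀ (by positivity) hc]
    have h2 : c * (1 + ‖(f z)⁻¹‖ ^ 2)
        ≤ ‖deriv (fun w => (f w)⁻¹) z‖ := by
      rw [le_div_iff₀ (by positivity)] at hge'
      linarith
    calc (1 + ‖(f z)⁻¹‖ ^ 2) * (1 + ‖w₀‖ ^ 2) * c
        = (c * (1 + ‖(f z)⁻¹‖ ^ 2)) * (1 + ‖w₀‖ ^ 2) := by ring
      _ ≤ ‖deriv (fun w => (f w)⁻¹) z‖ * (1 + ‖w₀‖ ^ 2) := by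
          apply mul_le_mul_of_nonneg_right h2 (by positivity)
      _ ≤ 1 * ((1 + ‖w₀‖ ^ 2) * ‖deriv (fun w => (f w)⁻¹) z‖) := by
          ring_nf; rfl


private lemma align_abs (p t : ℂ) (hp : p ≠ 0) (ht : t ≠ 0) :
    ∃ lam : ℂ, ‖lam‖ = 1 ∧
      ‖p + lam * t‖ = ‖p‖ + ‖t‖ := by
  have hA0 : ((‖p‖ : ℝ) : ℂ) ≠ 0 := by
    norm_cast; simpa [norm_pos_iff] using hp
  have hB0 : ((‖t‖ : ℝ) : ℂ) ≠ 0 := by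
    norm_cast; simpa [norm_pos_iff] using ht
  have hct : conj t * t = ((‖t‖ : ℝ) : ℂ) ^ 2 := by
    rw [mul_comm, Complex.mul_conj]
    norm_cast
    rw [Complex.sq_norm]
  refine ⟨(p / ((‖p‖ : ℝ) : ℂ)) * (conj t / ((‖t‖ : ℝ) : ℂ)), ?_, ?_⟩
  · rw [norm_mul, norm_div, norm_div, Complex.norm_conj, Complex.norm_real, Real.norm_eq_abs,
      Complex.norm_real, Real.norm_eq_abs, _root_.abs_of_nonneg (norm_nonneg p),
      _root_.abs_of_nonneg (norm_nonneg t), div_self ((norm_ne_zero_iff.mpr hp)),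
      div_self ((norm_ne_zero_iff.mpr ht)), one_mul]
  · have h1 : p + (p / ((‖p‖ : ℝ) : ℂ)) * (conj t / ((‖t‖ : ℝ) : ℂ)) * t
        = (p / ((‖p‖ : ℝ) : ℂ)) * (((‖p‖ : ℝ) : ℂ) + ((‖t‖ : ℝ) : ℂ)) := by
      field_simp
      linear_combination hct
    rw [h1, norm_mul, norm_div, Complex.norm_real, Real.norm_eq_abs, _root_.abs_of_nonneg (norm_nonneg p),
      div_self ((norm_ne_zero_iff.mpr hp)), one_mul]
    have : (((‖p‖ : ℝ) : ℂ) + ((‖t‖ : ℝ) : ℂ))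
        = (((‖p‖ + ‖t‖ : ℝ)) : ℂ) := by push_cast; ring
    rw [this, Complex.norm_real, Real.norm_eq_abs, _root_.abs_of_nonneg (by positivity)]



private lemma n_lb {a₀ r u : ℝ} (ha₀0 : 0 ≤ a₀) (ha₀1 : a₀ ≤ 1) (hr0 : 0 ≤ r) (hrb : r ≤ 1)
    (h0 : 0 ≤ u) (h1 : 1 - a₀ * r ≤ u) : (1 - a₀) ^ 2 ≤ u ^ 2 := by
  nlinarith [mul_le_of_le_one_right ha₀0 hrb]

private lemma real_bound {c a₀ r n m A B : ℝ} (hc : 0 < c) (ha₀0 : 0 ≤ a₀) (ha₀1 : a₀ < 1)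
    (hrr : 1 - (1 - a₀) ^ 2 / 2 < r) (hrb : r < 1)
    (hnm : n - m = (1 - a₀ ^ 2) * (1 - r ^ 2))
    (hn_lb : (1 - a₀) ^ 2 ≤ n) (hm_pos : 0 < m) (hA0 : 0 ≤ A) (hB0 : 0 ≤ B)
    (hPQ : A + B ≤ 1 / c) :
    A + n * (B / m) ≤ 1 / (c * (1 - (1 - r ^ 2) / (1 - a₀) ^ 2)) := by
  have h1a₀ : 0 < 1 - a₀ := by linarith
  have hr0 : 0 < r := by nlinarith [mul_nonneg ha₀0 (sub_nonneg.mpr ha₀1.le)]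
  have h1r2 : 0 ≤ 1 - r ^ 2 := by nlinarith
  have he0 : 0 ≤ (1 - r ^ 2) / (1 - a₀) ^ 2 := div_nonneg h1r2 (by positivity)
  have h1r2' : 1 - r ^ 2 < (1 - a₀) ^ 2 := by nlinarith
  have hM_pos : 0 < 1 - (1 - r ^ 2) / (1 - a₀) ^ 2 := by
    have := (div_lt_one (show (0:ℝ) < (1 - a₀) ^ 2 by positivity)).mpr h1r2'
    linarith
  set M : ℝ := 1 - (1 - r ^ 2) / (1 - a₀) ^ 2 with hMdef
  have hM_le1 : M ≤ 1 := by rw [hMdef]; linarith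
  have hq : (1 - a₀) ^ 2 * ((1 - r ^ 2) / (1 - a₀) ^ 2) = 1 - r ^ 2 := by field_simp
  have hmn : M * n ≤ m := by
    have H1 : (1 - a₀) ^ 2 * ((1 - r ^ 2) / (1 - a₀) ^ 2)
        ≤ n * ((1 - r ^ 2) / (1 - a₀) ^ 2) := mul_le_mul_of_nonneg_right hn_lb he0
    rw [hq] at H1
    have h4 : 0 ≤ a₀ ^ 2 * (1 - r ^ 2) := mul_nonneg (sq_nonneg a₀) h1r2
    rw [hMdef]
    nlinarith
  have step1 : n * (B / m) ≤ B / M := by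
    rw [mul_div_assoc', div_le_div_iff₀ hm_pos hM_pos]
    have hn0 : 0 ≤ n := le_trans (by positivity) hn_lb
    nlinarith
  have step2 : A ≤ A / M := by
    rw [le_div_iff₀ hM_pos]
    nlinarith
  have step3 : A / M + B / M ≤ (1 / c) / M := by
    rw [← add_div]
    exact (div_le_div_iff_of_pos_right hM_pos).mpr hPQ
  have step4 : (1 / c) / M = 1 / (c * M) := by
    field_simp
  linarith

private lemma final_alg {c d x : ℝ} (hc : 0 < c) (hd : 0 < d) (hx : 0 < x)
    (hfin : 1 / x + d ^ 2 * x ≤ 1 / c) :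
    x ≤ (1 + Real.sqrt (1 - 4 * c ^ 2 * d ^ 2)) / (2 * c * d ^ 2) := by
  have h1 : c + c * d ^ 2 * x ^ 2 ≤ x := by
    have h0 := mul_le_mul_of_nonneg_left hfin (le_of_lt (mul_pos hc hx))
    have e1 : (c * x) * (1 / x + d ^ 2 * x) = c + c * d ^ 2 * x ^ 2 := by
      field_simp
    have e2 : (c * x) * (1 / c) = x := by field_simp
    rw [e1, e2] at h0
    exact h0
  have h2 : (2 * c * d ^ 2 * x - 1) ^ 2 ≤ 1 - 4 * c ^ 2 * d ^ 2 := by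
    nlinarith [mul_le_mul_of_nonneg_left h1 (show (0:ℝ) ≤ 4 * c * d ^ 2 by positivity)]
  have h3 : 2 * c * d ^ 2 * x - 1 ≤ Real.sqrt (1 - 4 * c ^ 2 * d ^ 2) := by
    calc 2 * c * d ^ 2 * x - 1 ≤ |2 * c * d ^ 2 * x - 1| := le_abs_self _
      _ = Real.sqrt ((2 * c * d ^ 2 * x - 1) ^ 2) := (Real.sqrt_sq_eq_abs _).symm
      _ ≤ Real.sqrt (1 - 4 * c ^ 2 * d ^ 2) := Real.sqrt_le_sqrt h2
  rw [le_div_iff₀ (by positivity)]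
  linarith


private lemma moebius_identity (a z : ℂ) :
    ‖1 - conj a * z‖ ^ 2 - ‖z - a‖ ^ 2
      = (1 - ‖a‖ ^ 2) * (1 - ‖z‖ ^ 2) := by
  simp only [Complex.sq_norm, Complex.normSq_apply, Complex.add_re, Complex.add_im,
    Complex.mul_re, Complex.mul_im, Complex.conj_re, Complex.conj_im, Complex.one_re,
    Complex.one_im, Complex.sub_re, Complex.sub_im]
  ring

set_option maxHeartbeats 2000000 in
private lemma key {c : ℝ} (hc : 0 < c) {f : ℂ → ℂ} (hf : MeroOnDisk f)
    (hge : ∀ z ∈ ball (0 : ℂ) 1, c ≤ sphDeriv f z) {z₀ : ℂ} (hz₀ : z₀ ∈ ball (0 : ℂ) 1)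
    (hA : AnalyticAt ℂ f z₀) :
    sphDeriv f z₀ ≤ (1 + Real.sqrt (1 - 4 * c ^ 2 * (1 - ‖z₀‖ ^ 2) ^ 2)) /
        (2 * c * (1 - ‖z₀‖ ^ 2) ^ 2) := by
  classical
  have habs_z₀ : ‖z₀‖ < 1 := by
    rwa [mem_ball_zero_iff] at hz₀
  set w₀ : ℂ := f z₀ with hw₀def
  set κ : ℂ := ((1 + ‖w₀‖ ^ 2 : ℝ) : ℂ) with hκdef
  have hκ : κ ≠ 0 := by
    rw [hκdef]
    norm_cast
    positivity
  have hκabs : ‖κ‖ = 1 + ‖w₀‖ ^ 2 := by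
    rw [hκdef, Complex.norm_real, Real.norm_eq_abs, abs_of_pos (by positivity)]
  have hκ_eq : (1 : ℂ) + conj w₀ * w₀ = κ := by
    rw [hκdef, Complex.ofReal_add, Complex.ofReal_one, Complex.ofReal_pow, mul_comm,
      Complex.mul_conj]
    norm_cast
    rw [Complex.sq_norm]
  set P : ℂ → ℂ := Rfun f κ 1 (conj w₀) with hPdef
  set Q : ℂ → ℂ := Rfun f κ (-w₀) 1 with hQdef
  have hf'₀ : deriv f z₀ ≠ 0 := deriv_ne hc hA (hge z₀ hz₀)
  set d : ℝ := 1 - ‖z₀‖ ^ 2 with hddef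
  have hd : 0 < d := by
    have : ‖z₀‖ ^ 2 < 1 := by nlinarith [norm_nonneg z₀]
    rw [hddef]; linarith
  set x : ℝ := sphDeriv f z₀ with hxdef
  have hx_eq : x = ‖deriv f z₀‖ / (1 + ‖w₀‖ ^ 2) := by
    rw [hxdef, sphDeriv, if_pos hA, hw₀def]
  have hcx : c ≤ x := hge z₀ hz₀
  have hx0 : 0 < x := lt_of_lt_of_le hc hcx
  -- the function Q/(z-z₀)², with the singularity at z₀ removed
  set Qt : ℂ → ℂ := Function.update (fun z => Q z / (z - z₀) ^ 2) z₀ (deriv f z₀ / κ)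
    with hQtdef
  have hQan_ev : ∀ᶠ w in 𝓝 z₀, AnalyticAt ℂ Q w := by
    filter_upwards [isOpen_ball.mem_nhds hz₀] with w hw
    exact Rfun_analytic hc hf hge hκ _ _ hw
  have hQt_noteq : ∀ w, w ≠ z₀ → Qt w = Q w / (w - z₀) ^ 2 := fun w hw => by
    rw [hQtdef, Function.update_of_ne hw]
  have hQt_z₀val : Qt z₀ = deriv f z₀ / κ := by rw [hQtdef, Function.update_self]
  have hQt_z₀ : AnalyticAt ℂ Qt z₀ := by
    apply Complex.analyticAt_of_differentiable_on_punctured_nhds_of_continuousAt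
    · filter_upwards [eventually_nhdsWithin_of_eventually_nhds hQan_ev,
        self_mem_nhdsWithin] with w hQw hw
      have hw' : w ≠ z₀ := hw
      have hev : (fun v => Q v / (v - z₀) ^ 2) =ᶠ[𝓝 w] Qt := by
        filter_upwards [eventually_ne_nhds hw'] with v hv
        exact (hQt_noteq v hv).symm
      have hdw : DifferentiableAt ℂ (fun v => Q v / (v - z₀) ^ 2) w :=
        hQw.differentiableAt.div (by fun_prop) (pow_ne_zero 2 (sub_ne_zero.mpr hw'))
      exact hdw.congr_of_eventuallyEq hev.symm
    · rw [hQtdef, continuousAt_update_same]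
      have hsl : Tendsto (slope f z₀) (𝓝[≠] z₀) (𝓝 (deriv f z₀)) :=
        hasDerivAt_iff_tendsto_slope.mp hA.differentiableAt.hasDerivAt
      have hder_c : Tendsto (fun z => κ * deriv f z) (𝓝[≠] z₀) (𝓝 (κ * deriv f z₀)) :=
        (tendsto_const_nhds.mul (analyticAt_deriv hA).continuousAt).mono_left
          nhdsWithin_le_nhds
      have hlim : Tendsto (fun z => (slope f z₀ z) ^ 2 / (κ * deriv f z)) (𝓝[≠] z₀)
          (𝓝 (deriv f z₀ / κ)) := by
        have h1 : Tendsto (fun z => (slope f z₀ z) ^ 2 / (κ * deriv f z)) (𝓝[≠] z₀)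
            (𝓝 ((deriv f z₀) ^ 2 / (κ * deriv f z₀))) :=
          (hsl.pow 2).div hder_c (by simp [hκ, hf'₀])
        have h2 : (deriv f z₀) ^ 2 / (κ * deriv f z₀) = deriv f z₀ / κ := by
          rw [pow_two, mul_comm κ (deriv f z₀), mul_div_mul_left _ _ hf'₀]
        rwa [h2] at h1
      refine hlim.congr' ?_
      have hdev : ∀ᶠ w in 𝓝 z₀, deriv f w ≠ 0 :=
        (analyticAt_deriv hA).continuousAt.eventually_ne hf'₀
      filter_upwards [eventually_nhdsWithin_of_eventually_nhds hA.eventually_analyticAt,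
        eventually_nhdsWithin_of_eventually_nhds hdev, self_mem_nhdsWithin] with w hAw hdw hw
      have hw' : (w : ℂ) ≠ z₀ := hw
      have hQw : Q w = (-w₀ + 1 * f w) ^ 2 / (κ * deriv f w) := by
        rw [hQdef, Rfun, if_pos hAw]
      rw [slope_def_field, hQw, hw₀def]
      have hsub : w - z₀ ≠ 0 := sub_ne_zero.mpr hw'
      field_simp
      ring
  have hQt_an : ∀ z ∈ ball (0 : ℂ) 1, AnalyticAt ℂ Qt z := by
    intro z hz
    rcases eq_or_ne z z₀ with rfl | hne
    · exact hQt_z₀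
    · have hform : AnalyticAt ℂ (fun v => Q v / (v - z₀) ^ 2) z :=
        (Rfun_analytic hc hf hge hκ _ _ hz).div
          ((analyticAt_id.sub analyticAt_const).pow 2)
          (pow_ne_zero 2 (sub_ne_zero.mpr hne))
      refine hform.congr ?_
      filter_upwards [eventually_ne_nhds hne] with v hv
      exact (hQt_noteq v hv).symm
  -- values at z₀
  set p : ℂ := κ / deriv f z₀ with hpdef
  set t : ℂ := ((d : ℝ) : ℂ) ^ 2 * (deriv f z₀ / κ) with htdef
  have hp0 : p ≠ 0 := div_ne_zero hκ hf'₀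
  have ht0 : t ≠ 0 := by
    apply mul_ne_zero
    · norm_cast
      positivity
    · exact div_ne_zero hf'₀ hκ
  have hpabs : ‖p‖ = 1 / x := by
    rw [hpdef, norm_div, hκabs, hx_eq, one_div_div]
  have htabs : ‖t‖ = d ^ 2 * x := by
    rw [htdef, norm_mul, norm_pow, norm_div, Complex.norm_real, Real.norm_eq_abs, _root_.abs_of_pos hd,
      hκabs, hx_eq]
  obtain ⟨lam, hlam1, halign⟩ := align_abs p t hp0 ht0
  set H : ℂ → ℂ := fun z => P z + lam * ((1 - conj z₀ * z) ^ 2 * Qt z) with hHdef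
  have hdC : (1 : ℂ) - conj z₀ * z₀ = ((d : ℝ) : ℂ) := by
    rw [hddef, Complex.ofReal_sub, Complex.ofReal_one, Complex.ofReal_pow, mul_comm,
      Complex.mul_conj]
    norm_cast
    rw [Complex.sq_norm]
  have hPz₀ : P z₀ = p := by
    rw [hPdef, Rfun, if_pos hA, ← hw₀def, hκ_eq, hpdef, pow_two, mul_div_mul_left _ _ hκ]
  have hHz₀ : H z₀ = p + lam * t := by
    rw [hHdef]
    simp only []
    rw [hPz₀, hQt_z₀val, hdC, htdef]
  -- H is analytic on the disk
  have hHan : ∀ z ∈ ball (0 : ℂ) 1, AnalyticAt ℂ H z := by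
    intro z hz
    apply (Rfun_analytic hc hf hge hκ _ _ hz).add
    apply analyticAt_const.mul
    exact ((analyticAt_const.sub (analyticAt_const.mul analyticAt_id)).pow 2).mul
      (hQt_an z hz)
  -- maximum principle bound on circles
  set a₀ : ℝ := ‖z₀‖ with ha₀
  have ha₀0 : 0 ≤ a₀ := norm_nonneg z₀
  have ha₀1 : a₀ < 1 := habs_z₀
  set r₁ : ℝ := max a₀ (1 - (1 - a₀) ^ 2 / 2) with hr₁def
  have hr₁1 : r₁ < 1 := by
    apply max_lt ha₀1
    nlinarith [sq_nonneg (1 - a₀)]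
  have hmain : ∀ r ∈ Ioo r₁ (1:ℝ),
      ‖H z₀‖ ≤ 1 / (c * (1 - (1 - r ^ 2) / (1 - a₀) ^ 2)) := by
    rintro r ⟨hra, hrb⟩
    have hz₀r : a₀ < r := lt_of_le_of_lt (le_max_left _ _) hra
    have hr0 : 0 < r := lt_of_le_of_lt ha₀0 hz₀r
    have hrr : 1 - (1 - a₀) ^ 2 / 2 < r := lt_of_le_of_lt (le_max_right _ _) hra
    have hfr : ∀ z ∈ frontier (ball (0 : ℂ) r),
        ‖H z‖ ≤ 1 / (c * (1 - (1 - r ^ 2) / (1 - a₀) ^ 2)) := by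
      intro z hzf
      rw [frontier_ball _ (ne_of_gt hr0)] at hzf
      have habs_z : ‖z‖ = r := by
        exact mem_sphere_zero_iff_norm.mp hzf
      have hz_ball : z ∈ ball (0 : ℂ) 1 := by
        rw [mem_ball_zero_iff, habs_z]
        exact hrb
      have hz_ne : z ≠ z₀ := by
        intro h
        rw [h, ← ha₀] at habs_z
        exact absurd habs_z (ne_of_lt hz₀r)
      have hPQ : ‖P z‖ + ‖Q z‖ ≤ 1 / c := by
        rw [hPdef, hQdef, hκdef]
        exact Rfun_bound hc hf hge w₀ hz_ball
      have hnm : ‖1 - conj z₀ * z‖ ^ 2 - ‖z - z₀‖ ^ 2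
          = (1 - a₀ ^ 2) * (1 - r ^ 2) := by
        rw [moebius_identity, ← ha₀, habs_z]
      have h1' : 1 - a₀ * r ≤ ‖1 - conj z₀ * z‖ := by
        have h2' := norm_sub_norm_le (1 : ℂ) (conj z₀ * z)
        rw [norm_one, norm_mul, Complex.norm_conj,
          ← ha₀, habs_z] at h2'
        exact h2'
      have hn_lb : (1 - a₀) ^ 2 ≤ ‖1 - conj z₀ * z‖ ^ 2 :=
        n_lb ha₀0 ha₀1.le hr0.le hrb.le (norm_nonneg _) h1'
      have hm_pos : 0 < ‖z - z₀‖ ^ 2 := by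
        have : z - z₀ ≠ 0 := sub_ne_zero.mpr hz_ne
        have : ‖z - z₀‖ ≠ 0 := (norm_ne_zero_iff.mpr this)
        positivity
      have hQtz : Qt z = Q z / (z - z₀) ^ 2 := hQt_noteq z hz_ne
      rw [hHdef]
      have hchain : ‖P z + lam * ((1 - conj z₀ * z) ^ 2 * Qt z)‖
          ≤ ‖P z‖ + ‖1 - conj z₀ * z‖ ^ 2
              * (‖Q z‖ / ‖z - z₀‖ ^ 2) := by
        refine le_trans (norm_add_le _ _) ?_
        rw [norm_mul, hlam1, one_mul, norm_mul, norm_pow, hQtz, norm_div, norm_pow]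
      exact le_trans hchain
        (real_bound hc ha₀0 ha₀1 hrr hrb hnm hn_lb hm_pos (norm_nonneg _)
          (norm_nonneg _) hPQ)
    have hsub1 : ball (0:ℂ) r ⊆ ball (0:ℂ) 1 := ball_subset_ball hrb.le
    have hdc : DiffContOnCl ℂ H (ball (0:ℂ) r) := by
      constructor
      · exact fun z hz => (hHan z (hsub1 hz)).differentiableAt.differentiableWithinAt
      · rw [closure_ball (0:ℂ) (ne_of_gt hr0)]
        exact fun z hz =>
          (hHan z (closedBall_subset_ball hrb hz)).continuousAt.continuousWithinAt
    have hz₀mem : z₀ ∈ closure (ball (0:ℂ) r) := by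
      apply subset_closure
      rw [mem_ball_zero_iff, ← ha₀]
      exact hz₀r
    have hmax := Complex.norm_le_of_forall_mem_frontier_norm_le isBounded_ball hdc hfr hz₀mem
    exact hmax
  -- let r → 1
  have hlim : ‖H z₀‖ ≤ 1 / c := by
    have hT : Tendsto (fun r : ℝ => 1 / (c * (1 - (1 - r ^ 2) / (1 - a₀) ^ 2)))
        (𝓝[<] (1:ℝ)) (𝓝 (1 / c)) := by
      have hMcont : Tendsto (fun r : ℝ => c * (1 - (1 - r ^ 2) / (1 - a₀) ^ 2)) (𝓝 1)
          (𝓝 (c * (1 - ((1:ℝ) - 1 ^ 2) / (1 - a₀) ^ 2))) := by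
        apply Continuous.tendsto
        continuity
      have h2 : c * (1 - ((1:ℝ) - 1 ^ 2) / (1 - a₀) ^ 2) = c := by norm_num
      rw [h2] at hMcont
      exact (tendsto_const_nhds.div hMcont (ne_of_gt hc)).mono_left nhdsWithin_le_nhds
    exact ge_of_tendsto hT (eventually_of_mem (Ioo_mem_nhdsLT hr₁1) hmain)
  -- conclude
  have hfin : 1 / x + d ^ 2 * x ≤ 1 / c := by
    rw [← hpabs, ← htabs, ← halign, ← hHz₀]
    exact hlim
  exact final_alg hc hd hx0 hfin

private lemma not_both {c : ℝ} (hc : 0 < c) {f : ℂ → ℂ} {z : ℂ} (hA : AnalyticAt ℂ f z)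
    (hg : AnalyticAt ℂ (fun w => (f w)⁻¹) z) (hfz : f z = 0) (hge : c ≤ sphDeriv f z) :
    False := by
  have hne : ∀ᶠ w in 𝓝[≠] z, f w ≠ 0 := by
    rcases hA.eventually_eq_zero_or_eventually_ne_zero with h | h
    · exfalso
      have hd : deriv f z = 0 := by
        have h2 := Filter.EventuallyEq.deriv_eq h
        simpa using h2
      rw [sphDeriv, if_pos hA, hd, hfz] at hge
      simp at hge
      linarith
    · exact h
  have h1 : Tendsto (fun w => f w * (f w)⁻¹) (𝓝[≠] z) (𝓝 (f z * (f z)⁻¹)) :=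
    (hA.continuousAt.mul hg.continuousAt).tendsto.mono_left nhdsWithin_le_nhds
  have h2 : Tendsto (fun w => f w * (f w)⁻¹) (𝓝[≠] z) (𝓝 1) :=
    tendsto_const_nhds.congr' (hne.mono fun w hw => (mul_inv_cancel₀ hw).symm)
  have h3 := tendsto_nhds_unique h1 h2
  rw [hfz] at h3
  simp at h3

private lemma sphDeriv_inv {c : ℝ} (hc : 0 < c) {f : ℂ → ℂ} (hf : MeroOnDisk f)
    (hge : ∀ z ∈ ball (0:ℂ) 1, c ≤ sphDeriv f z) {z : ℂ} (hz : z ∈ ball (0:ℂ) 1) :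
    sphDeriv (fun w => (f w)⁻¹) z = sphDeriv f z := by
  have hinvinv : (fun w => ((f w)⁻¹)⁻¹) = f := by
    funext w
    exact inv_inv _
  by_cases hA : AnalyticAt ℂ f z
  · by_cases hg : AnalyticAt ℂ (fun w => (f w)⁻¹) z
    · have hfz : f z ≠ 0 := fun h0 => not_both hc hA hg h0 (hge z hz)
      rw [sphDeriv, if_pos hg, sphDeriv, if_pos hA]
      have hder : deriv (fun w => (f w)⁻¹) z = -deriv f z / (f z) ^ 2 :=
        deriv_inv'' hA.differentiableAt hfz
      rw [hder, norm_div, norm_neg, norm_pow, norm_inv]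
      have habs : (0:ℝ) < ‖f z‖ := (norm_pos_iff.mpr hfz)
      rw [div_eq_div_iff (by positivity) (by positivity)]
      field_simp
      ring
    · rw [sphDeriv, if_neg hg, sphDeriv, if_pos hA, hinvinv, inv_inv]
  · obtain ⟨hg, hval⟩ := (hf z hz).resolve_left hA
    rw [sphDeriv, if_pos hg, sphDeriv, if_neg hA, hval]

private lemma mero_inv {f : ℂ → ℂ} (hf : MeroOnDisk f) : MeroOnDisk (fun w => (f w)⁻¹) := by
  intro z hz
  have hinvinv : (fun w => ((f w)⁻¹)⁻¹) = f := by
    funext w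
    exact inv_inv _
  rcases hf z hz with hA | ⟨hg, hval⟩
  · by_cases hg : AnalyticAt ℂ (fun w => (f w)⁻¹) z
    · exact Or.inl hg
    · refine Or.inr ⟨by rw [hinvinv]; exact hA, ?_⟩
      rw [inv_inv]
      by_contra h0
      exact hg (hA.inv h0)
  · exact Or.inl hg

/-- Upper bound for the spherical derivative of `f ∈ ℱ_c` at any point of the disk. -/
theorem sphDeriv_upper (c : ℝ) (hc : 0 < c) (f : ℂ → ℂ) (hf : MeroOnDisk f)
    (hge : ∀ z ∈ ball (0 : ℂ) 1, c ≤ sphDeriv f z) (z₀ : ℂ) (hz₀ : z₀ ∈ ball (0 : ℂ) 1) :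
    sphDeriv f z₀ ≤
      (1 + Real.sqrt (1 - 4 * c ^ 2 * (1 - ‖z₀‖ ^ 2) ^ 2)) /
        (2 * c * (1 - ‖z₀‖ ^ 2) ^ 2) := by
  by_cases hA : AnalyticAt ℂ f z₀
  · exact key hc hf hge hz₀ hA
  · have hg := ((hf z₀ hz₀).resolve_left hA).1
    have hge' : ∀ z ∈ ball (0:ℂ) 1, c ≤ sphDeriv (fun w => (f w)⁻¹) z := fun z hz => by
      rw [sphDeriv_inv hc hf hge hz]
      exact hge z hz
    have h := key hc (mero_inv hf) hge' hz₀ hg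
    rwa [sphDeriv_inv hc hf hge hz₀] at h
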